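/- Let λ ∈ (0,1)^d be distinct and α ∈ ℝ_{>0}^d with Σ_{i=1}^d α_i < 1 and Σ_{i=1}^d α_i/λ_i < 1. Then the parameters (α̂, λ̂) satisfying BLT_n(α, λ)^{-1} = BLT_n(α̂, λ̂) for all n, with λ̂ sorted decreasingly, satisfy the strict interlacing λ_1 > λ̂_1 > λ_2 > λ̂_2 > ⋯ > λ_{d-1} > λ̂_{d-1} > λ_d > λ̂_d, where λ is also sorted decreasingly. -/

import Mathlib

open Finset

/-- The `n × n` lower-triangular Toeplitz matrix whose first column is
`a 0, a 1, a 2, …`. -/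
def ltToeplitz (n : ℕ) (a : ℕ → ℝ) : Matrix (Fin n) (Fin n) ℝ :=
  Matrix.of fun j k => if (k : ℕ) ≤ (j : ℕ) then a ((j : ℕ) - (k : ℕ)) else 0

/-- First column of the BLT matrix: `1, ∑ αᵢ, ∑ αᵢλᵢ, ∑ αᵢλᵢ², …` -/
def bltCoef (d : ℕ) (α lam : Fin d → ℝ) : ℕ → ℝ :=
  fun t => if t = 0 then 1 else ∑ i, α i * lam i ^ (t - 1)

open PowerSeries in
lemma blt_geom (a : ℝ) :
    (1 - PowerSeries.C (R := ℝ) a * PowerSeries.X) * PowerSeries.mk (fun n => a ^ n) = 1 := by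
  ext n
  cases n with
  | zero => simp
  | succ n =>
    simp only [sub_mul, one_mul, map_sub, mul_assoc, coeff_succ_X_mul, coeff_mk,
      PowerSeries.coeff_C_mul, PowerSeries.coeff_one, Nat.succ_ne_zero, if_false]
    ring

open PowerSeries in
lemma blt_mk_eq (d : ℕ) (α lam : Fin d → ℝ) :
    PowerSeries.mk (bltCoef d α lam)
      = 1 + ∑ i, PowerSeries.C (R := ℝ) (α i) * (PowerSeries.X * PowerSeries.mk (fun n => lam i ^ n)) := by
  ext n
  cases n with
  | zero => simp [bltCoef]
  | succ n =>
    simp [bltCoef, coeff_succ_X_mul, PowerSeries.coeff_C_mul, PowerSeries.coeff_one,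
      PowerSeries.coeff_mk, map_sum]

open PowerSeries in
lemma blt_prod_mul (d : ℕ) (α lam : Fin d → ℝ) :
    (∏ i, (1 - PowerSeries.C (R := ℝ) (lam i) * PowerSeries.X)) * PowerSeries.mk (bltCoef d α lam)
      = ∏ i, (1 - PowerSeries.C (R := ℝ) (lam i) * PowerSeries.X)
        + PowerSeries.X * ∑ i, PowerSeries.C (R := ℝ) (α i) *
            ∏ j ∈ univ.erase i, (1 - PowerSeries.C (R := ℝ) (lam j) * PowerSeries.X) := by
  rw [blt_mk_eq, mul_add, mul_one, mul_sum]
  congr 1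
  rw [Finset.mul_sum]
  apply Finset.sum_congr rfl
  intro i _
  calc (∏ j, (1 - PowerSeries.C (R := ℝ) (lam j) * PowerSeries.X)) *
        (PowerSeries.C (R := ℝ) (α i) * (PowerSeries.X * PowerSeries.mk (fun n => lam i ^ n)))
      = PowerSeries.C (R := ℝ) (α i) * PowerSeries.X *
          ((∏ j ∈ univ.erase i, (1 - PowerSeries.C (R := ℝ) (lam j) * PowerSeries.X)) *
            ((1 - PowerSeries.C (R := ℝ) (lam i) * PowerSeries.X) * PowerSeries.mk (fun n => lam i ^ n))) := by
        rw [← Finset.mul_prod_erase _ _ (mem_univ i)]; ring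
    _ = PowerSeries.X * (PowerSeries.C (R := ℝ) (α i) *
          ∏ j ∈ univ.erase i, (1 - PowerSeries.C (R := ℝ) (lam j) * PowerSeries.X)) := by
        rw [blt_geom]; ring

lemma blt_conv (a b : ℕ → ℝ) (ha0 : a 0 = 1)
    (hinv : ∀ n : ℕ, 0 < n → (ltToeplitz n a)⁻¹ = ltToeplitz n b) :
    PowerSeries.mk a * PowerSeries.mk b = 1 := by
  have key : ∀ t : ℕ, ∑ k ∈ range (t + 1), a (t - k) * b k = if t = 0 then 1 else 0 := by
    intro t
    have htri : (ltToeplitz (t + 1) a).BlockTriangular OrderDual.toDual := by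
      intro i j hij
      have h2 : (i : ℕ) < (j : ℕ) := hij
      show (if (j : ℕ) ≤ (i : ℕ) then a ((i : ℕ) - (j : ℕ)) else 0) = 0
      rw [if_neg (not_le.mpr h2)]
    have hdet : (ltToeplitz (t + 1) a).det = 1 := by
      rw [Matrix.det_of_lowerTriangular _ htri]
      simp [ltToeplitz, ha0]
    have hmul : ltToeplitz (t + 1) a * ltToeplitz (t + 1) b = 1 := by
      rw [← hinv (t + 1) t.succ_pos]
      exact Matrix.mul_nonsing_inv _ (by rw [hdet]; exact isUnit_one)
    have hthis := congrFun (congrFun hmul (Fin.last t)) 0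
    rw [Matrix.mul_apply] at hthis
    have hL : ∀ k : Fin (t + 1),
        ltToeplitz (t + 1) a (Fin.last t) k * ltToeplitz (t + 1) b k 0
          = a (t - (k : ℕ)) * b (k : ℕ) := by
      intro k
      have hk : (k : ℕ) ≤ t := Nat.lt_succ_iff.mp k.isLt
      show (if (k : ℕ) ≤ ((Fin.last t : Fin (t+1)) : ℕ) then a (((Fin.last t : Fin (t+1)) : ℕ) - (k : ℕ)) else 0)
          * (if ((0 : Fin (t+1)) : ℕ) ≤ (k : ℕ) then b ((k : ℕ) - ((0 : Fin (t+1)) : ℕ)) else 0)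
          = a (t - (k : ℕ)) * b (k : ℕ)
      rw [Fin.val_last, if_pos hk, Fin.val_zero, if_pos (Nat.zero_le _), Nat.sub_zero]
    rw [Finset.sum_congr rfl (fun k _ => hL k)] at hthis
    rw [Fin.sum_univ_eq_sum_range (fun k => a (t - k) * b k)] at hthis
    rw [hthis]
    by_cases ht : t = 0
    · subst ht; simp [Matrix.one_apply]
    · have hne : Fin.last t ≠ 0 := by
        simpa [Fin.ext_iff] using ht
      simp [Matrix.one_apply, hne, ht]
  ext t
  rw [PowerSeries.coeff_mul, Finset.Nat.sum_antidiagonal_eq_sum_range_succ_mk]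
  have hswap : ∑ k ∈ range (t + 1), a k * b (t - k)
      = ∑ k ∈ range (t + 1), a (t - k) * b k := by
    calc ∑ k ∈ range (t + 1), a k * b (t - k)
        = ∑ k ∈ range (t + 1), a (t - (t + 1 - 1 - k)) * b (t + 1 - 1 - k) := by
          apply Finset.sum_congr rfl
          intro j hj
          have hj' : j ≤ t := Nat.lt_succ_iff.mp (mem_range.mp hj)
          rw [Nat.succ_sub_one, Nat.sub_sub_self hj']
      _ = ∑ k ∈ range (t + 1), a (t - k) * b k :=
          Finset.sum_range_reflect (fun k => a (t - k) * b k) (t + 1)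
  simp only [PowerSeries.coeff_mk]
  rw [hswap, key t]
  simp [PowerSeries.coeff_one]

noncomputable def bltR (d : ℕ) (α lam : Fin d → ℝ) : Polynomial ℝ :=
  (∏ i, (1 - Polynomial.C (lam i) * Polynomial.X))
    + Polynomial.X * ∑ i, Polynomial.C (α i) *
        ∏ j ∈ univ.erase i, (1 - Polynomial.C (lam j) * Polynomial.X)

lemma bltR_eval (d : ℕ) (α lam : Fin d → ℝ) (x : ℝ) :
    (bltR d α lam).eval x
      = (∏ i, (1 - lam i * x)) + x * ∑ i, α i * ∏ j ∈ univ.erase i, (1 - lam j * x) := by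
  simp [bltR, Polynomial.eval_prod, Polynomial.eval_finset_sum]

lemma prod_sign_neg {d : ℕ} (s : Finset (Fin d)) (f : Fin d → ℝ) (hf : ∀ j ∈ s, f j < 0) :
    0 < (-1 : ℝ) ^ s.card * ∏ j ∈ s, f j := by
  have : ∏ j ∈ s, f j = (-1 : ℝ) ^ s.card * ∏ j ∈ s, (-(f j)) := by
    rw [← Finset.prod_const, ← Finset.prod_mul_distrib]
    exact Finset.prod_congr rfl fun j _ => by ring
  rw [this, ← mul_assoc, ← mul_pow]
  simpa using Finset.prod_pos fun j hj => neg_pos.mpr (hf j hj)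

lemma blt_roots (d : ℕ) (hd : 0 < d) (α lam : Fin d → ℝ)
    (hlam : ∀ i, 0 < lam i) (hord : StrictAnti lam) (halpha : ∀ i, 0 < α i)
    (hsum2 : ∑ i, α i / lam i < 1) :
    ∃ ν : Fin d → ℝ, StrictMono ν ∧ (∀ i, (lam i)⁻¹ < ν i) ∧
      (∀ i j : Fin d, (j : ℕ) = (i : ℕ) + 1 → ν i < (lam j)⁻¹) ∧
      (∀ i, (bltR d α lam).eval (ν i) = 0) := by
  classical
  set μ : Fin d → ℝ := fun i => (lam i)⁻¹ with hμ
  have hμpos : ∀ i, 0 < μ i := fun i => inv_pos.mpr (hlam i)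
  have hμmono : StrictMono μ := fun i j hij =>
    (inv_lt_inv₀ (hlam i) (hlam j)).mpr (hord hij)
  -- sign at μ i
  have hevalμ : ∀ i, (bltR d α lam).eval (μ i)
      = μ i * (α i * ∏ j ∈ univ.erase i, (1 - lam j * μ i)) := by
    intro i
    rw [bltR_eval]
    have h1 : (∏ j, (1 - lam j * μ i)) = 0 :=
      Finset.prod_eq_zero (mem_univ i) (by
        simp [hμ, mul_inv_cancel₀ (hlam i).ne'])
    have h2 : (∑ k, α k * ∏ j ∈ univ.erase k, (1 - lam j * μ i))
        = α i * ∏ j ∈ univ.erase i, (1 - lam j * μ i) := by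
      apply Finset.sum_eq_single
      · intro k _ hk
        have : (∏ j ∈ univ.erase k, (1 - lam j * μ i)) = 0 :=
          Finset.prod_eq_zero (Finset.mem_erase.mpr ⟨hk.symm, mem_univ i⟩)
            (by simp [hμ, mul_inv_cancel₀ (hlam i).ne'])
        simp [this]
      · intro h; exact absurd (mem_univ i) h
    rw [h1, h2]; ring
  have hsignμ : ∀ i : Fin d, 0 < (-1 : ℝ) ^ (i : ℕ) * (bltR d α lam).eval (μ i) := by
    intro i
    rw [hevalμ]
    have hsplit : univ.erase i = (univ.filter (· < i)) ∪ (univ.filter (i < ·)) := by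
      ext j
      simp only [Finset.mem_erase, mem_univ, and_true, Finset.mem_union, Finset.mem_filter,
        true_and]
      constructor
      · intro h; exact lt_or_gt_of_ne h
      · rintro (h | h) <;> [exact ne_of_lt h; exact ne_of_gt h]
    have hdisj : Disjoint (univ.filter (· < i)) (univ.filter (i < ·)) := by
      rw [Finset.disjoint_filter]
      intro j _ hj
      exact not_lt.mpr hj.le
    have hcard : (univ.filter (· < i)).card = (i : ℕ) := by
      have : univ.filter (· < i) = Finset.Iio i := by ext j; simp
      rw [this, Fin.card_Iio]
    have hneg : ∀ j ∈ univ.filter (· < i), (1 - lam j * μ i) < 0 := by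
      intro j hj
      have hji : j < i := (Finset.mem_filter.mp hj).2
      have h : (1 : ℝ) < lam j * μ i := by
        have h := (one_lt_div (hlam i)).mpr (hord hji)
        rwa [div_eq_mul_inv] at h
      linarith
    have hpos : ∀ j ∈ univ.filter (i < ·), 0 < (1 - lam j * μ i) := by
      intro j hj
      have hji : i < j := (Finset.mem_filter.mp hj).2
      have h : lam j * μ i < 1 := by
        have h := (div_lt_one (hlam i)).mpr (hord hji)
        rwa [div_eq_mul_inv] at h
      linarith
    rw [hsplit, Finset.prod_union hdisj]
    have h1 : 0 < (-1 : ℝ) ^ (i : ℕ) * ∏ j ∈ univ.filter (· < i), (1 - lam j * μ i) := by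
      have := prod_sign_neg (univ.filter (· < i)) (fun j => 1 - lam j * μ i) hneg
      rwa [hcard] at this
    have h2 : 0 < ∏ j ∈ univ.filter (i < ·), (1 - lam j * μ i) :=
      Finset.prod_pos hpos
    have h3 : 0 < μ i * α i := mul_pos (hμpos i) (halpha i)
    calc (0:ℝ) < (μ i * α i) * (((-1 : ℝ) ^ (i : ℕ) *
            ∏ j ∈ univ.filter (· < i), (1 - lam j * μ i)) *
            ∏ j ∈ univ.filter (i < ·), (1 - lam j * μ i)) :=
          mul_pos h3 (mul_pos h1 h2)
      _ = (-1 : ℝ) ^ (i : ℕ) * (μ i * (α i *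
            ((∏ j ∈ univ.filter (· < i), (1 - lam j * μ i)) *
             ∏ j ∈ univ.filter (i < ·), (1 - lam j * μ i)))) := by ring
  -- the large point x₀
  set sA : ℝ := ∑ i, α i / lam i with hsA
  have hsA0 : 0 ≤ sA := Finset.sum_nonneg fun i _ =>
    le_of_lt (div_pos (halpha i) (hlam i))
  set θ : ℝ := (sA + 1) / 2 with hθ
  have hθ0 : 0 < θ := by rw [hθ]; linarith
  have hθ1 : θ < 1 := by rw [hθ]; linarith
  have hθs : sA < θ := by rw [hθ]; linarith
  set i₀ : Fin d := ⟨d - 1, Nat.sub_lt hd one_pos⟩ with hi₀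
  set lmin : ℝ := lam i₀ with hlmin
  have hlminpos : 0 < lmin := hlam i₀
  have hmin : ∀ i, lmin ≤ lam i := by
    intro i
    apply hord.antitone
    rw [Fin.le_def]
    simp only [hi₀]
    omega
  set x₀ : ℝ := ((1 - θ) * lmin)⁻¹ with hx₀
  have hbase : 0 < (1 - θ) * lmin := mul_pos (by linarith) hlminpos
  have hx₀pos : 0 < x₀ := inv_pos.mpr hbase
  have hμx₀ : ∀ i, μ i < x₀ := by
    intro i
    have h1 : (1 - θ) * lmin < lam i :=
      lt_of_lt_of_le (by nlinarith) (hmin i)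
    exact (inv_lt_inv₀ (hlam i) hbase).mpr h1
  have hfac : ∀ i, 1 - lam i * x₀ < 0 := by
    intro i
    have h1 : (1 - θ) * lmin < lam i := lt_of_lt_of_le (by nlinarith) (hmin i)
    have h2 : (1 : ℝ) < lam i * x₀ := by
      rw [hx₀]
      have h3 := (one_lt_div hbase).mpr h1
      rwa [div_eq_mul_inv] at h3
    linarith
  set c : Fin d → ℝ := fun i => α i / (lam i - (1 - θ) * lmin) with hc
  have hDpos : ∀ i, 0 < lam i - (1 - θ) * lmin := by
    intro i
    have h5 := hmin i
    nlinarith [hlam i]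
  have hcpos : ∀ i, 0 < c i := fun i => div_pos (halpha i) (hDpos i)
  have hterm : ∀ i : Fin d, -(c i) * (1 - lam i * x₀) = x₀ * α i := by
    intro i
    rw [hc, hx₀]
    have hD := (hDpos i).ne'
    have h1θ : 1 - θ ≠ 0 := by linarith
    field_simp
    ring
  have hcsum : ∑ i, c i < 1 := by
    have h1 : ∀ i : Fin d, c i ≤ α i / (θ * lam i) := by
      intro i
      apply div_le_div_of_nonneg_left (le_of_lt (halpha i)) (mul_pos hθ0 (hlam i))
      have h5 := hmin i
      nlinarith
    have h2 : ∑ i, α i / (θ * lam i) = θ⁻¹ * sA := by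
      rw [hsA, Finset.mul_sum]
      exact Finset.sum_congr rfl fun i _ => by
        rw [div_eq_mul_inv, mul_inv, div_eq_mul_inv]
        ring
    have h3 : θ⁻¹ * sA < 1 := by
      rw [← div_eq_inv_mul]
      exact (div_lt_one hθ0).mpr hθs
    calc ∑ i, c i ≤ ∑ i, α i / (θ * lam i) := Finset.sum_le_sum fun i _ => h1 i
      _ = θ⁻¹ * sA := h2
      _ < 1 := h3
  have hP₀ : 0 < (-1 : ℝ) ^ d * ∏ j, (1 - lam j * x₀) := by
    have h6 := prod_sign_neg univ (fun j => 1 - lam j * x₀) (fun j _ => hfac j)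
    rwa [Finset.card_univ, Fintype.card_fin] at h6
  have heval₀ : (bltR d α lam).eval x₀
      = (∏ j, (1 - lam j * x₀)) * (1 - ∑ i, c i) := by
    rw [bltR_eval]
    have h1 : ∀ i : Fin d, x₀ * α i * ∏ j ∈ univ.erase i, (1 - lam j * x₀)
        = -(c i) * ∏ j, (1 - lam j * x₀) := by
      intro i
      rw [← Finset.mul_prod_erase univ (fun j => 1 - lam j * x₀) (mem_univ i),
        ← hterm i]
      ring
    rw [Finset.mul_sum]
    rw [Finset.sum_congr rfl fun i (_ : i ∈ univ) =>
      (by rw [← mul_assoc]; exact h1 i :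
        x₀ * (α i * ∏ j ∈ univ.erase i, (1 - lam j * x₀))
          = -(c i) * ∏ j, (1 - lam j * x₀))]
    rw [← Finset.sum_mul, Finset.sum_neg_distrib]
    ring
  have hsign₀ : 0 < (-1 : ℝ) ^ d * (bltR d α lam).eval x₀ := by
    rw [heval₀, ← mul_assoc]
    exact mul_pos hP₀ (by linarith)
  -- IVT
  set nxt : Fin d → ℝ := fun i =>
    if h : (i : ℕ) + 1 < d then μ ⟨(i : ℕ) + 1, h⟩ else x₀ with hnxt
  have hnxt_gt : ∀ i, μ i < nxt i := by
    intro i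
    simp only [hnxt]
    by_cases h : (i : ℕ) + 1 < d
    · rw [dif_pos h]
      exact hμmono (by rw [Fin.lt_def]; simp)
    · rw [dif_neg h]
      exact hμx₀ i
  have hsign_nxt : ∀ i : Fin d, 0 < (-1 : ℝ) ^ ((i : ℕ) + 1) * (bltR d α lam).eval (nxt i) := by
    intro i
    simp only [hnxt]
    by_cases h : (i : ℕ) + 1 < d
    · rw [dif_pos h]
      have h7 := hsignμ ⟨(i : ℕ) + 1, h⟩
      simpa using h7
    · rw [dif_neg h]
      have hde : (i : ℕ) + 1 = d := by
        have h8 := i.isLt; omega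
      rw [hde]
      exact hsign₀
  have hroot : ∀ i : Fin d, ∃ x, x ∈ Set.Ioo (μ i) (nxt i)
      ∧ (bltR d α lam).eval x = 0 := by
    intro i
    set g : ℝ → ℝ := fun x => (-1 : ℝ) ^ (i : ℕ) * (bltR d α lam).eval x with hg
    have hgc : ContinuousOn g (Set.Icc (μ i) (nxt i)) :=
      (continuous_const.mul (bltR d α lam).continuous).continuousOn
    have hgb : g (nxt i) < 0 := by
      have h1 := hsign_nxt i
      have h2 : (-1 : ℝ) ^ ((i : ℕ) + 1) = -(-1 : ℝ) ^ (i : ℕ) := by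
        rw [pow_succ]; ring
      rw [h2] at h1
      rw [hg]
      simp only
      linarith
    have hga : 0 < g (μ i) := hsignμ i
    have h9 := intermediate_value_Ioo' (le_of_lt (hnxt_gt i)) hgc
      (Set.mem_Ioo.mpr ⟨hgb, hga⟩)
    obtain ⟨x, hx, hgx⟩ := h9
    refine ⟨x, hx, ?_⟩
    have hne : ((-1 : ℝ) ^ (i : ℕ)) ≠ 0 := by simp
    have h10 : (-1 : ℝ) ^ (i : ℕ) * (bltR d α lam).eval x = 0 := hgx
    exact (mul_eq_zero.mp h10).resolve_left hne
  choose ν hν using hroot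
  have hν1 : ∀ i, μ i < ν i := fun i => (hν i).1.1
  have hν2 : ∀ i j : Fin d, (j : ℕ) = (i : ℕ) + 1 → ν i < μ j := by
    intro i j hji
    have h : (i : ℕ) + 1 < d := hji ▸ j.isLt
    have hnj : nxt i = μ j := by
      simp only [hnxt]
      rw [dif_pos h]
      congr 1
      exact Fin.ext hji.symm
    rw [← hnj]
    exact (hν i).1.2
  have hνmono : StrictMono ν := by
    intro i j hij
    have h1 : (i : ℕ) + 1 ≤ (j : ℕ) := hij
    have h2 : (i : ℕ) + 1 < d := lt_of_le_of_lt h1 j.isLt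
    have h3 : ν i < μ ⟨(i : ℕ) + 1, h2⟩ := hν2 i ⟨(i : ℕ) + 1, h2⟩ rfl
    have h4 : μ ⟨(i : ℕ) + 1, h2⟩ ≤ μ j := hμmono.monotone (by rw [Fin.le_def]; exact h1)
    exact lt_trans (lt_of_lt_of_le h3 h4) (hν1 j)
  exact ⟨ν, hνmono, hν1, hν2, fun i => (hν i).2⟩

lemma deg_aux (d : ℕ) (s : Finset (Fin d)) (f : Fin d → ℝ) :
    (∏ i ∈ s, (1 - Polynomial.C (f i) * Polynomial.X)).natDegree ≤ s.card := by
  refine le_trans (Polynomial.natDegree_prod_le _ _) ?_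
  have h1 : ∀ i ∈ s, (1 - Polynomial.C (f i) * Polynomial.X).natDegree ≤ 1 := by
    intro i _
    refine le_trans (Polynomial.natDegree_sub_le _ _) ?_
    refine max_le (by simp) ?_
    exact le_trans (Polynomial.natDegree_C_mul_le _ _) (by simp)
  refine le_trans (Finset.sum_le_card_nsmul s _ 1 h1) (by simp)

lemma bltR_natDegree_le (d : ℕ) (hd : 0 < d) (α lam : Fin d → ℝ) :
    (bltR d α lam).natDegree ≤ d := by
  unfold bltR
  refine le_trans (Polynomial.natDegree_add_le _ _) (max_le ?_ ?_)
  · exact le_trans (deg_aux d univ lam) (by simp)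
  · refine le_trans (Polynomial.natDegree_mul_le) ?_
    have hQ : (∑ i, Polynomial.C (α i) *
        ∏ j ∈ univ.erase i, (1 - Polynomial.C (lam j) * Polynomial.X)).natDegree ≤ d - 1 := by
      refine Polynomial.natDegree_sum_le_of_forall_le _ _ fun i _ => ?_
      refine le_trans (Polynomial.natDegree_C_mul_le _ _) ?_
      refine le_trans (deg_aux d _ lam) ?_
      rw [Finset.card_erase_of_mem (mem_univ i), Finset.card_univ, Fintype.card_fin]
    rw [Polynomial.natDegree_X]
    omega

lemma eq_of_evals (d : ℕ) (p q : Polynomial ℝ) (hp : p.natDegree ≤ d) (hq : q.natDegree ≤ d)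
    (ν : Fin d → ℝ) (hinj : Function.Injective ν) (hν0 : ∀ i, ν i ≠ 0)
    (h0 : p.eval 0 = q.eval 0) (hroots : ∀ i, p.eval (ν i) = q.eval (ν i)) : p = q := by
  classical
  have h := Polynomial.eq_zero_of_natDegree_lt_card_of_eval_eq_zero (p - q)
    (f := fun o : Option (Fin d) => o.elim 0 ν) ?_ ?_ ?_
  · exact sub_eq_zero.mp h
  · intro o o' hoo'
    cases o with
    | none => cases o' with
      | none => rfl
      | some j => exact absurd hoo'.symm (hν0 j)
    | some i => cases o' with
      | none => exact absurd hoo' (hν0 i)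
      | some j => exact congrArg _ (hinj hoo')
  · intro o
    cases o with
    | none => simp [h0]
    | some i => simp [hroots i]
  · refine lt_of_le_of_lt (le_trans (Polynomial.natDegree_sub_le _ _) (max_le hp hq)) ?_
    simp

lemma expsum_vanish {ι : Type*} [Fintype ι] [DecidableEq ι] (w : ι → ℝ) (cc : ι → ℝ)
    (h : ∀ t : ℕ, ∑ k, cc k * w k ^ t = 0) (x : ℝ) :
    ∑ k ∈ univ.filter (fun k => w k = x), cc k = 0 := by
  classical
  by_cases hx : x ∈ univ.image w
  · set s : Finset ℝ := univ.image w with hs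
    set p : Polynomial ℝ := Lagrange.basis s id x with hp
    have h1 : ∑ k, cc k * p.eval (w k) = 0 := by
      have : ∀ k, cc k * p.eval (w k)
          = ∑ t ∈ Finset.range (p.natDegree + 1), p.coeff t * (cc k * w k ^ t) := by
        intro k
        rw [Polynomial.eval_eq_sum_range, Finset.mul_sum]
        exact Finset.sum_congr rfl fun t _ => by ring
      rw [Finset.sum_congr rfl fun k _ => this k, Finset.sum_comm]
      rw [Finset.sum_congr rfl (fun t (_ : t ∈ Finset.range (p.natDegree + 1)) => by
        rw [← Finset.mul_sum, h t, mul_zero] :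
          ∀ t ∈ Finset.range (p.natDegree + 1), (∑ k, p.coeff t * (cc k * w k ^ t)) = 0)]
      exact Finset.sum_const_zero
    rw [← h1]
    rw [← Finset.sum_filter_add_sum_filter_not univ (fun k => w k = x)
      (fun k => cc k * p.eval (w k))]
    have h2 : ∀ k ∈ univ.filter (fun k => w k = x), cc k * p.eval (w k) = cc k := by
      intro k hk
      have hwk : w k = x := (Finset.mem_filter.mp hk).2
      have he : p.eval x = 1 := by
        simpa [hp] using Lagrange.eval_basis_self (Set.injOn_id (s : Set ℝ)) hx
      rw [hwk, he, mul_one]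
    have h3 : ∀ k ∈ univ.filter (fun k => ¬ w k = x), cc k * p.eval (w k) = 0 := by
      intro k hk
      have hwk : ¬ w k = x := (Finset.mem_filter.mp hk).2
      have hmem : w k ∈ s := Finset.mem_image.mpr ⟨k, mem_univ k, rfl⟩
      have he0 : p.eval (w k) = 0 := by
        simpa [hp] using Lagrange.eval_basis_of_ne (v := id) (s := s)
          (fun hxx => hwk hxx.symm) hmem
      rw [he0, mul_zero]
    rw [Finset.sum_congr rfl h2, Finset.sum_congr rfl h3, Finset.sum_const_zero, add_zero]
  · have : univ.filter (fun k => w k = x) = ∅ := by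
      rw [Finset.filter_eq_empty_iff]
      intro k _
      exact fun hk => hx (Finset.mem_image.mpr ⟨k, mem_univ k, hk⟩)
    rw [this, Finset.sum_empty]

lemma coe_prod_ps (d : ℕ) (s : Finset (Fin d)) (f : Fin d → ℝ) :
    (((∏ i ∈ s, (1 - Polynomial.C (f i) * Polynomial.X)) : Polynomial ℝ) : PowerSeries ℝ)
      = ∏ i ∈ s, (1 - PowerSeries.C (R := ℝ) (f i) * PowerSeries.X) := by
  rw [← Polynomial.coeToPowerSeries.ringHom_apply, map_prod]
  exact Finset.prod_congr rfl fun i _ => by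
    simp [map_sub, map_mul, map_one, Polynomial.coeToPowerSeries.ringHom_apply,
      Polynomial.coe_C, Polynomial.coe_X]

lemma coe_bltR (d : ℕ) (α lam : Fin d → ℝ) :
    ((bltR d α lam : Polynomial ℝ) : PowerSeries ℝ)
      = (∏ i, (1 - PowerSeries.C (R := ℝ) (lam i) * PowerSeries.X))
        + PowerSeries.X * ∑ i, PowerSeries.C (R := ℝ) (α i) *
            ∏ j ∈ univ.erase i, (1 - PowerSeries.C (R := ℝ) (lam j) * PowerSeries.X) := by
  rw [bltR, ← Polynomial.coeToPowerSeries.ringHom_apply, map_add, map_mul, map_sum]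
  congr 1
  · rw [Polynomial.coeToPowerSeries.ringHom_apply, coe_prod_ps]
  · congr 1
    · rw [Polynomial.coeToPowerSeries.ringHom_apply, Polynomial.coe_X]
    · exact Finset.sum_congr rfl fun i _ => by
        rw [map_mul, Polynomial.coeToPowerSeries.ringHom_apply,
          Polynomial.coeToPowerSeries.ringHom_apply, Polynomial.coe_C, coe_prod_ps]

lemma blt_ps_key (d : ℕ) (α lam : Fin d → ℝ) :
    (∏ i, (1 - PowerSeries.C (R := ℝ) (lam i) * PowerSeries.X)) * PowerSeries.mk (bltCoef d α lam)
      = ((bltR d α lam : Polynomial ℝ) : PowerSeries ℝ) := by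
  rw [coe_bltR]
  exact blt_prod_mul d α lam

lemma fin_le_strictMono {d : ℕ} (f : Fin d → Fin d) (hf : StrictMono f) (i : Fin d) :
    i ≤ f i := by
  have h : WellFoundedLT (Fin d) := inferInstance
  exact @StrictMono.le_apply (Fin d) _ h f hf i

/-- If `λ` (sorted decreasingly) and `λ̂` (sorted decreasingly) are the decay
parameters of a BLT and its inverse, then they strictly interlace:
`λ₁ > λ̂₁ > λ₂ > λ̂₂ > ⋯ > λ_d > λ̂_d`. -/
theorem blt_inverse_interlacing (d : ℕ) (α lam αh lamh : Fin d → ℝ)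
    (hlam : ∀ i, lam i ∈ Set.Ioo (0 : ℝ) 1)
    (hord : StrictAnti lam)  -- λ sorted decreasingly (hence distinct)
    (halpha : ∀ i, 0 < α i)
    (hsum1 : ∑ i, α i < 1)
    (hsum2 : ∑ i, α i / lam i < 1)
    (hordh : StrictAnti lamh)  -- λ̂ sorted decreasingly
    (hinv : ∀ n : ℕ, 0 < n →
      (ltToeplitz n (bltCoef d α lam))⁻¹ = ltToeplitz n (bltCoef d αh lamh)) :
    (∀ i, lamh i < lam i) ∧
    (∀ i j : Fin d, (j : ℕ) = (i : ℕ) + 1 → lam j < lamh i) := by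
  classical
  rcases Nat.eq_zero_or_pos d with hd0 | hd
  · subst hd0; exact ⟨fun i => i.elim0, fun i => i.elim0⟩
  have hlam0 : ∀ i, 0 < lam i := fun i => (hlam i).1
  obtain ⟨ν, hνmono, hν1, hν2, hνroot⟩ := blt_roots d hd α lam hlam0 hord halpha hsum2
  have hνpos : ∀ i, 0 < ν i := fun i => lt_trans (inv_pos.mpr (hlam0 i)) (hν1 i)
  have hνinj := hνmono.injective
  have hνμ : ∀ i j : Fin d, ν i ≠ (lam j)⁻¹ := by
    intro i j
    rcases le_or_gt j i with h | h
    · have h1 : (lam j)⁻¹ ≤ (lam i)⁻¹ :=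
        inv_anti₀ (hlam0 i) (hord.antitone h)
      exact (lt_of_le_of_lt h1 (hν1 i)).ne'
    · have h1 : (i : ℕ) + 1 ≤ (j : ℕ) := h
      have h2 : (i : ℕ) + 1 < d := lt_of_le_of_lt h1 j.isLt
      have h3 : ν i < (lam ⟨(i : ℕ) + 1, h2⟩)⁻¹ := hν2 i ⟨(i : ℕ) + 1, h2⟩ rfl
      have h4 : (lam ⟨(i : ℕ) + 1, h2⟩)⁻¹ ≤ (lam j)⁻¹ :=
        inv_anti₀ (hlam0 j) (hord.antitone (by rw [Fin.le_def]; exact h1))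
      exact (lt_of_lt_of_le h3 h4).ne
  have hfacne : ∀ i j : Fin d, 1 - lam j * ν i ≠ 0 := by
    intro i j hzero
    apply hνμ i j
    exact eq_inv_of_mul_eq_one_left (by linarith)
  have hνinvinj : Function.Injective (fun i : Fin d => (ν i)⁻¹) := by
    intro i j hij
    apply hνinj
    have := congrArg (fun y : ℝ => y⁻¹) hij
    simpa [inv_inv] using this
  -- identity 1 : R = ∏ (1 - ν⁻¹ X)
  have hReq : bltR d α lam = ∏ i, (1 - Polynomial.C ((ν i)⁻¹) * Polynomial.X) := by
    apply eq_of_evals d _ _ (bltR_natDegree_le d hd α lam)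
      (le_trans (deg_aux d univ _) (by simp)) ν hνinj (fun i => (hνpos i).ne')
    · rw [bltR_eval]
      simp [Polynomial.eval_prod]
    · intro i
      rw [hνroot i, Polynomial.eval_prod]
      symm
      apply Finset.prod_eq_zero (mem_univ i)
      simp [inv_mul_cancel₀ (hνpos i).ne']
  -- the coefficients b of the inverse
  set b : Fin d → ℝ := fun i =>
    (∏ j, (1 - lam j * ν i)) / (ν i * ∏ j ∈ univ.erase i, (1 - (ν j)⁻¹ * ν i)) with hb
  have hfacν : ∀ i j : Fin d, j ≠ i → 1 - (ν j)⁻¹ * ν i ≠ 0 := by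
    intro i j hne hzero
    apply hne
    apply hνinj
    have h1 : ν i = ((ν j)⁻¹)⁻¹ := eq_inv_of_mul_eq_one_left (by linarith)
    rw [inv_inv] at h1
    exact h1.symm
  have hden : ∀ i, ν i * ∏ j ∈ univ.erase i, (1 - (ν j)⁻¹ * ν i) ≠ 0 := fun i =>
    mul_ne_zero (hνpos i).ne'
      (Finset.prod_ne_zero_iff.mpr fun j hj => hfacν i j (Finset.mem_erase.mp hj).1)
  have hbne : ∀ i, b i ≠ 0 := fun i =>
    div_ne_zero (Finset.prod_ne_zero_iff.mpr fun j _ => hfacne i j) (hden i)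
  -- identity 2 : ∏ (1 - λ X) = bltR b ν⁻¹
  have hPeq : (∏ i, (1 - Polynomial.C (lam i) * Polynomial.X))
      = bltR d b (fun i => (ν i)⁻¹) := by
    apply eq_of_evals d _ _ (le_trans (deg_aux d univ _) (by simp))
      (bltR_natDegree_le d hd b _) ν hνinj (fun i => (hνpos i).ne')
    · rw [bltR_eval]
      simp [Polynomial.eval_prod]
    · intro i
      rw [bltR_eval, Polynomial.eval_prod]
      have e1 : (∏ j, (1 - (ν j)⁻¹ * ν i)) = 0 :=
        Finset.prod_eq_zero (mem_univ i) (by simp [inv_mul_cancel₀ (hνpos i).ne'])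
      have e2 : (∑ k, b k * ∏ j ∈ univ.erase k, (1 - (ν j)⁻¹ * ν i))
          = b i * ∏ j ∈ univ.erase i, (1 - (ν j)⁻¹ * ν i) := by
        apply Finset.sum_eq_single
        · intro k _ hk
          rw [Finset.prod_eq_zero (Finset.mem_erase.mpr ⟨hk.symm, mem_univ i⟩)
            (by simp [inv_mul_cancel₀ (hνpos i).ne'])]
          ring
        · intro hmem; exact absurd (mem_univ i) hmem
      rw [e1, e2, zero_add]
      have e3 : ν i * (b i * ∏ j ∈ univ.erase i, (1 - (ν j)⁻¹ * ν i))
          = ∏ j, (1 - lam j * ν i) := by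
        rw [show ν i * (b i * ∏ j ∈ univ.erase i, (1 - (ν j)⁻¹ * ν i))
            = b i * (ν i * ∏ j ∈ univ.erase i, (1 - (ν j)⁻¹ * ν i)) from by ring]
        simp only [hb]
        rw [div_mul_cancel₀ _ (hden i)]
      rw [e3]
      simp
  -- power series identities
  have h1 : (∏ i, (1 - PowerSeries.C (R := ℝ) (lam i) * PowerSeries.X))
        * PowerSeries.mk (bltCoef d α lam)
      = ∏ i, (1 - PowerSeries.C (R := ℝ) ((ν i)⁻¹) * PowerSeries.X) := by
    rw [blt_ps_key, hReq, coe_prod_ps]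
  have h2 : (∏ i, (1 - PowerSeries.C (R := ℝ) ((ν i)⁻¹) * PowerSeries.X))
        * PowerSeries.mk (bltCoef d b (fun i => (ν i)⁻¹))
      = ∏ i, (1 - PowerSeries.C (R := ℝ) (lam i) * PowerSeries.X) := by
    rw [blt_ps_key, ← hPeq, coe_prod_ps]
  have hPlunit : IsUnit (∏ i, (1 - PowerSeries.C (R := ℝ) (lam i) * PowerSeries.X)) := by
    rw [PowerSeries.isUnit_iff_constantCoeff, map_prod]
    have : ∀ i ∈ univ, (PowerSeries.constantCoeff (R := ℝ)) (1 - PowerSeries.C (R := ℝ) (lam i) * PowerSeries.X) = 1 := by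
      intro i _
      simp
    rw [Finset.prod_congr rfl this, Finset.prod_const_one]
    exact isUnit_one
  have hFG : PowerSeries.mk (bltCoef d α lam) * PowerSeries.mk (bltCoef d b (fun i => (ν i)⁻¹)) = 1 := by
    apply hPlunit.mul_left_cancel
    rw [← mul_assoc, h1, h2, mul_one]
  have hFGh : PowerSeries.mk (bltCoef d α lam) * PowerSeries.mk (bltCoef d αh lamh) = 1 :=
    blt_conv _ _ (by simp [bltCoef]) hinv
  have hGeq : PowerSeries.mk (bltCoef d αh lamh) = PowerSeries.mk (bltCoef d b (fun i => (ν i)⁻¹)) := by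
    calc PowerSeries.mk (bltCoef d αh lamh)
        = PowerSeries.mk (bltCoef d αh lamh) *
          (PowerSeries.mk (bltCoef d α lam) * PowerSeries.mk (bltCoef d b (fun i => (ν i)⁻¹))) := by
          rw [hFG, mul_one]
      _ = (PowerSeries.mk (bltCoef d α lam) * PowerSeries.mk (bltCoef d αh lamh)) *
          PowerSeries.mk (bltCoef d b (fun i => (ν i)⁻¹)) := by ring
      _ = PowerSeries.mk (bltCoef d b (fun i => (ν i)⁻¹)) := by rw [hFGh, one_mul]
  have hcoefeq : ∀ t : ℕ, (∑ i, αh i * lamh i ^ t) = ∑ i, b i * ((ν i)⁻¹) ^ t := by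
    intro t
    have h := congrArg (PowerSeries.coeff (R := ℝ) (t + 1)) hGeq
    rw [PowerSeries.coeff_mk, PowerSeries.coeff_mk] at h
    simpa [bltCoef] using h
  -- exponential sum matching
  have hzero : ∀ t : ℕ, ∑ k : Fin d ⊕ Fin d,
      (Sum.elim αh (fun i => -b i)) k * (Sum.elim lamh (fun i => (ν i)⁻¹)) k ^ t = 0 := by
    intro t
    rw [Fintype.sum_sum_type]
    simp only [Sum.elim_inl, Sum.elim_inr]
    have h5 : (∑ k, -b k * ((ν k)⁻¹) ^ t) = -(∑ k, b k * ((ν k)⁻¹) ^ t) := by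
      rw [← Finset.sum_neg_distrib]
      exact Finset.sum_congr rfl fun k _ => by ring
    rw [h5, hcoefeq t]
    ring
  have hmatch : ∀ i : Fin d, ∃ k, lamh k = (ν i)⁻¹ := by
    intro i
    by_contra hno
    push_neg at hno
    have h6 := expsum_vanish (Sum.elim lamh (fun i => (ν i)⁻¹))
      (Sum.elim αh (fun i => -b i)) hzero ((ν i)⁻¹)
    rw [Finset.sum_filter, Fintype.sum_sum_type] at h6
    simp only [Sum.elim_inl, Sum.elim_inr] at h6
    have h7 : ∀ k : Fin d, (if lamh k = (ν i)⁻¹ then αh k else 0) = 0 := fun k =>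
      if_neg (hno k)
    have h8 : (∑ k, if (ν k)⁻¹ = (ν i)⁻¹ then -b k else 0) = -b i := by
      rw [Finset.sum_eq_single i (fun k _ hk => if_neg fun he => hk (hνinvinj he))
        (fun hmem => absurd (mem_univ i) hmem)]
      exact if_pos rfl
    simp only [hno, ↓reduceIte, Finset.sum_const_zero, zero_add] at h6
    exact hbne i (neg_eq_zero.mp (h8.symm.trans (by convert h6 using 1; exact Finset.sum_congr rfl fun k _ => by congr)))
  choose ψ hψ using hmatch
  have hψinj : Function.Injective ψ := by
    intro i j hij
    apply hνinvinj
    show (ν i)⁻¹ = (ν j)⁻¹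
    rw [← hψ i, ← hψ j, hij]
  have hνinvanti : StrictAnti (fun i : Fin d => (ν i)⁻¹) := fun i j hij =>
    (inv_lt_inv₀ (hνpos j) (hνpos i)).mpr (hνmono hij)
  have hψmono : StrictMono ψ := by
    intro i j hij
    have h : lamh (ψ j) < lamh (ψ i) := by rw [hψ i, hψ j]; exact hνinvanti hij
    exact hordh.lt_iff_gt.mp h
  have hψbij : Function.Bijective ψ := (Finite.injective_iff_bijective).mp hψinj
  have hψid : ∀ i, ψ i = i := by
    intro i
    have h9 : i ≤ ψ i := fin_le_strictMono ψ hψmono i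
    set σ := Equiv.ofBijective ψ hψbij with hσ
    have hσs : StrictMono ⇑σ.symm := by
      intro a bb hab
      apply hψmono.lt_iff_lt.mp
      have e1 : ψ (σ.symm a) = a := σ.apply_symm_apply a
      have e2 : ψ (σ.symm bb) = bb := σ.apply_symm_apply bb
      rw [e1, e2]; exact hab
    have h10 : ψ i ≤ σ.symm (ψ i) := fin_le_strictMono _ hσs (ψ i)
    have h11 : σ.symm (ψ i) = i := σ.symm_apply_apply i
    rw [h11] at h10
    exact le_antisymm h10 h9
  have hlamh : ∀ i, lamh i = (ν i)⁻¹ := fun i => by rw [← hψ i, hψid i]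
  refine ⟨fun i => ?_, fun i j hji => ?_⟩
  · rw [hlamh i]
    have h := (inv_lt_inv₀ (hνpos i) (inv_pos.mpr (hlam0 i))).mpr (hν1 i)
    rwa [inv_inv] at h
  · rw [hlamh i]
    have h := (inv_lt_inv₀ (inv_pos.mpr (hlam0 j)) (hνpos i)).mpr (hν2 i j hji)
    rwa [inv_inv] at h
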